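/- In the quasisymmetric function Hopf algebra with basis F_T (T ⊆ [n], homogeneous degree n+1), define the antipode by s(F_T) = (−1)^{n+1} F_{(complement of T)^∨} where S^∨ = {n+1−i : i ∈ S}. Then on the peak basis Θ_w = 2^{|w|_d+1} Σ_{T, [n]\T ∈ b[I^w]} F_T one has s(Θ_w) = (−1)^{deg w + 1} Θ_{w*}, where w* is the reverse of the cd-word w. -/

import Mathlib

/-- The degree of a cd-word (`false` = c, degree 1; `true` = d, degree 2). -/
def degw (w : List Bool) : ℕ := (w.map (fun b => if b then 2 else 1)).sum

/-- The left sparse set `S_w` of a cd-word: degrees of prefixes ending at each d. -/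
def Sw (w : List Bool) : Finset ℕ :=
  ((Finset.range w.length).filter (fun j => w.getD j false = true)).image
    (fun j => degw (w.take (j + 1)))

/-- `T ∈ b[I^w]`: `T` meets every interval `{i-1, i}` with `i ∈ S_w`. -/
def blocks (w : List Bool) (T : Finset ℕ) : Prop := ∀ i ∈ Sw w, i - 1 ∈ T ∨ i ∈ T

instance (w : List Bool) (T : Finset ℕ) : Decidable (blocks w T) := by
  unfold blocks; infer_instance

lemma degw_append (u v : List Bool) : degw (u ++ v) = degw u + degw v := by
  simp [degw, List.sum_reverse]

lemma degw_reverse (w : List Bool) : degw w.reverse = degw w := by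
  simp [degw, List.sum_reverse]

lemma mem_Sw (w : List Bool) (i : ℕ) :
    i ∈ Sw w ↔ ∃ j, j < w.length ∧ w.getD j false = true ∧ degw (w.take (j + 1)) = i := by
  simp [Sw]; tauto

lemma take_succ_of_true {w : List Bool} {j : ℕ} (hj : j < w.length)
    (ht : w.getD j false = true) : degw (w.take (j + 1)) = degw (w.take j) + 2 := by
  rw [List.take_succ]
  have : w[j]? = some true := by
    rw [List.getElem?_eq_getElem hj]
    simpa [List.getD_eq_getElem?_getD, List.getElem?_eq_getElem hj] using ht
  rw [this]
  simp [degw_append, degw]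

lemma degw_take_drop (w : List Bool) (k : ℕ) :
    degw (w.take k) + degw (w.drop k) = degw w := by
  conv_rhs => rw [← List.take_append_drop k w]
  rw [degw_append]

lemma Sw_bounds {w : List Bool} {i : ℕ} (hi : i ∈ Sw w) : 2 ≤ i ∧ i ≤ degw w := by
  rw [mem_Sw] at hi
  obtain ⟨j, hj, ht, hd⟩ := hi
  constructor
  · rw [← hd, take_succ_of_true hj ht]; omega
  · rw [← hd]
    have := degw_take_drop w (j + 1); omega

lemma Sw_reverse_sub (w : List Bool) {i : ℕ} (hi : i ∈ Sw w.reverse) :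
    ∃ p ∈ Sw w, i = degw w + 2 - p := by
  rw [mem_Sw] at hi
  obtain ⟨j, hj, ht, hd⟩ := hi
  rw [List.length_reverse] at hj
  set j' := w.length - 1 - j with hj'
  have hj'lt : j' < w.length := by omega
  have ht' : w.getD j' false = true := by
    have := List.getElem_reverse (l := w) (i := j) (by simpa using hj)
    rw [List.getD_eq_getElem?_getD, List.getElem?_eq_getElem hj'lt]
    rw [List.getD_eq_getElem?_getD, List.getElem?_eq_getElem (by simpa using hj)] at ht
    simpa [this] using ht
  refine ⟨degw (w.take (j' + 1)), (mem_Sw w _).2 ⟨j', hj'lt, ht', rfl⟩, ?_⟩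
  have h1 : degw (w.reverse.take (j + 1)) = degw (w.drop j') := by
    rw [List.take_reverse, degw_reverse]
    congr 2
    omega
  have h2 : degw (w.take (j' + 1)) = degw (w.take j') + 2 := take_succ_of_true hj'lt ht'
  have h3 := degw_take_drop w j'
  have hle : degw (w.take (j' + 1)) ≤ degw w := by
    have := degw_take_drop w (j' + 1); omega
  omega

lemma Sw_reverse (w : List Bool) :
    Sw w.reverse = (Sw w).image (fun p => degw w + 2 - p) := by
  apply Finset.Subset.antisymm
  · intro i hi
    obtain ⟨p, hp, rfl⟩ := Sw_reverse_sub w hi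
    exact Finset.mem_image.2 ⟨p, hp, rfl⟩
  · intro i hi
    obtain ⟨p, hp, rfl⟩ := Finset.mem_image.1 hi
    have hp' : p ∈ Sw w.reverse.reverse := by rwa [List.reverse_reverse]
    obtain ⟨q, hq, hpq⟩ := Sw_reverse_sub w.reverse hp'
    have hb := Sw_bounds hq
    have hb' := Sw_bounds hp
    rw [degw_reverse] at hpq hb
    have : degw w + 2 - p = q := by omega
    rwa [this]

lemma blocks_reverse_image {w : List Bool} {S : Finset ℕ}
    (hS : S ⊆ Finset.Icc 1 (degw w)) :
    blocks w.reverse (S.image (fun i => degw w + 1 - i)) ↔ blocks w S := by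
  constructor
  · intro h p hp
    have hb := Sw_bounds hp
    have hq : degw w + 2 - p ∈ Sw w.reverse := by
      rw [Sw_reverse]; exact Finset.mem_image.2 ⟨p, hp, rfl⟩
    rcases h _ hq with h1 | h1
    · obtain ⟨a, ha, hae⟩ := Finset.mem_image.1 h1
      have hab := Finset.mem_Icc.1 (hS ha)
      right; have : a = p := by omega
      rwa [← this]
    · obtain ⟨a, ha, hae⟩ := Finset.mem_image.1 h1
      have hab := Finset.mem_Icc.1 (hS ha)
      left; have : a = p - 1 := by omega
      rwa [← this]
  · intro h q hq
    rw [Sw_reverse] at hq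
    obtain ⟨p, hp, rfl⟩ := Finset.mem_image.1 hq
    have hb := Sw_bounds hp
    rcases h p hp with h1 | h1
    · right
      refine Finset.mem_image.2 ⟨p - 1, h1, ?_⟩
      have := Finset.mem_Icc.1 (hS h1); omega
    · left
      refine Finset.mem_image.2 ⟨p, h1, ?_⟩
      have := Finset.mem_Icc.1 (hS h1); omega

lemma image_subset_Icc {n : ℕ} {S : Finset ℕ} (hS : S ⊆ Finset.Icc 1 n) :
    S.image (fun i => n + 1 - i) ⊆ Finset.Icc 1 n := by
  intro x hx
  obtain ⟨a, ha, rfl⟩ := Finset.mem_image.1 hx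
  have := Finset.mem_Icc.1 (hS ha)
  rw [Finset.mem_Icc]; omega

lemma compl_image {n : ℕ} {T : Finset ℕ} (hT : T ⊆ Finset.Icc 1 n) :
    Finset.Icc 1 n \ ((Finset.Icc 1 n \ T).image (fun i => n + 1 - i))
      = T.image (fun i => n + 1 - i) := by
  ext x
  simp only [Finset.mem_sdiff, Finset.mem_image, Finset.mem_Icc]
  constructor
  · rintro ⟨⟨hx1, hx2⟩, hx3⟩
    refine ⟨n + 1 - x, ?_, by omega⟩
    by_contra hc
    exact hx3 ⟨n + 1 - x, ⟨⟨by omega, by omega⟩, hc⟩, by omega⟩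
  · rintro ⟨a, ha, rfl⟩
    have hab := Finset.mem_Icc.1 (hT ha)
    refine ⟨⟨by omega, by omega⟩, ?_⟩
    rintro ⟨b, ⟨⟨hb1, hb2⟩, hb3⟩, hbe⟩
    have : b = a := by omega
    exact hb3 (this ▸ ha)

lemma image_image_invol {n : ℕ} {T : Finset ℕ} (hT : T ⊆ Finset.Icc 1 n) :
    (T.image (fun i => n + 1 - i)).image (fun i => n + 1 - i) = T := by
  rw [Finset.image_image]
  have : ∀ x ∈ T, ((fun i => n + 1 - i) ∘ (fun i => n + 1 - i)) x = id x := by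
    intro x hx
    have := Finset.mem_Icc.1 (hT hx)
    simp; omega
  rw [Finset.image_congr this, Finset.image_id]


/-- in the degree-`(n+1)` component of the quasisymmetric functions,
with fundamental basis `F_T` (modeled by the basis vectors `Finsupp.single T 1`,
`T ⊆ [n]`), let the antipode `s` act by `s(F_T) = (-1)^{n+1} F_{(complement T)^∨}`
with `S^∨ = {n+1-i : i ∈ S}`.  Then on
`Θ_w = 2^{|w|_d+1} Σ_{T, [n]\T ∈ b[I^w]} F_T` one has
`s(Θ_w) = (-1)^{deg w + 1} Θ_{w*}` where `w*` is the reverse of `w`. -/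
theorem stmt_18 (n : ℕ) (w : List Bool) (hw : degw w = n)
    (Θ : List Bool → (Finset ℕ →₀ ℚ))
    (hΘ : ∀ u : List Bool, Θ u = (2 : ℚ) ^ (u.count true + 1) •
      ∑ T ∈ (Finset.Icc 1 n).powerset.filter
          (fun T => blocks u T ∧ blocks u (Finset.Icc 1 n \ T)),
        Finsupp.single T (1 : ℚ))
    (s : (Finset ℕ →₀ ℚ) →ₗ[ℚ] (Finset ℕ →₀ ℚ))
    (hs : ∀ T : Finset ℕ, s (Finsupp.single T 1)
      = ((-1 : ℚ) ^ (n + 1)) •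
          Finsupp.single ((Finset.Icc 1 n \ T).image (fun i => n + 1 - i)) 1) :
    s (Θ w) = ((-1 : ℚ) ^ (degw w + 1)) • Θ w.reverse := by
  have hk : w.reverse.count true = w.count true := List.count_reverse
  rw [hΘ w, hΘ w.reverse, map_smul, map_sum, hw, hk]
  simp only [hs]
  rw [← Finset.smul_sum, smul_comm]
  congr 1
  congr 1
  set C := Finset.Icc 1 n with hC
  set f : ℕ → ℕ := fun i => n + 1 - i with hf
  have compl_image' : ∀ {T : Finset ℕ}, T ⊆ C → C \ ((C \ T).image f) = T.image f :=
    fun hT => compl_image hT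
  have invol' : ∀ {T : Finset ℕ}, T ⊆ C → (T.image f).image f = T :=
    fun hT => image_image_invol hT
  have key : ∀ {S : Finset ℕ}, S ⊆ C → ∀ u : List Bool, degw u = n →
      (blocks u.reverse (S.image f) ↔ blocks u S) := by
    intro S hS u hu
    have := blocks_reverse_image (w := u) (S := S) (by rwa [hu])
    rwa [hu] at this
  have hrev : degw w.reverse = n := by rw [degw_reverse, hw]
  refine Finset.sum_nbij' (fun T => (C \ T).image f) (fun T => (C \ T).image f)
    ?_ ?_ ?_ ?_ ?_
  · intro T hT
    rw [Finset.mem_filter, Finset.mem_powerset] at hT ⊢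
    obtain ⟨hTC, hb1, hb2⟩ := hT
    have hCT : C \ T ⊆ C := Finset.sdiff_subset
    refine ⟨image_subset_Icc hCT, ?_, ?_⟩
    · exact (key hCT w hw).2 hb2
    · rw [compl_image' hTC]
      exact (key hTC w hw).2 hb1
  · intro T hT
    rw [Finset.mem_filter, Finset.mem_powerset] at hT ⊢
    obtain ⟨hTC, hb1, hb2⟩ := hT
    have hCT : C \ T ⊆ C := Finset.sdiff_subset
    refine ⟨image_subset_Icc hCT, ?_, ?_⟩
    · have := (key hCT w.reverse hrev).2 hb2
      rwa [List.reverse_reverse] at this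
    · rw [compl_image' hTC]
      have := (key hTC w.reverse hrev).2 hb1
      rwa [List.reverse_reverse] at this
  · intro T hT
    rw [Finset.mem_filter, Finset.mem_powerset] at hT
    show (C \ ((C \ T).image f)).image f = T
    rw [compl_image' hT.1, invol' hT.1]
  · intro T hT
    rw [Finset.mem_filter, Finset.mem_powerset] at hT
    show (C \ ((C \ T).image f)).image f = T
    rw [compl_image' hT.1, invol' hT.1]
  · intro T _
    rfl
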